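/- Let ε, δ, μ, Λ, C₁ be positive real numbers and set C_min := max{1/Λ, C₁/(2Λ)}. Assume ε²·μ ≥ C_min·δ. Let g : [0,1] → ℝ be twice continuously differentiable with g(x) ≥ −1 and ε²·|g''(x)| ≤ C₁ for all x ∈ [0,1]. Let φ : [0,1] → ℝ be twice continuously differentiable and satisfy the coercivity hypothesis ∫₀¹ (ε²·φ'(x)² + g(x)·φ(x)²) dx ≥ Λ·∫₀¹ (ε²·φ'(x)² + φ(x)²) dx. Then δ·∫₀¹ (ε²·φ''(x)² + g(x)·φ'(x)² − ½·g''(x)·φ(x)²) dx + μ·∫₀¹ (ε²·φ'(x)² + g(x)·φ(x)²) dx ≥ Λ·(μ − C_min·δ·ε⁻²)·∫₀¹ φ(x)² dx. -/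

import Mathlib

open Set

set_option maxHeartbeats 1000000

theorem stmt_0 (ε δ μ Λ C₁ : ℝ) (hε : 0 < ε) (hδ : 0 < δ) (hμ : 0 < μ)
    (hΛ : 0 < Λ) (hC₁ : 0 < C₁)
    (Cmin : ℝ) (hCmin : Cmin = max (1 / Λ) (C₁ / (2 * Λ)))
    (hcond : ε ^ 2 * μ ≥ Cmin * δ)
    (g : ℝ → ℝ) (hg : ContDiff ℝ 2 g)
    (hg1 : ∀ x ∈ Icc (0:ℝ) 1, g x ≥ -1)
    (hg2 : ∀ x ∈ Icc (0:ℝ) 1, ε ^ 2 * |deriv (deriv g) x| ≤ C₁)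
    (φ : ℝ → ℝ) (hφ : ContDiff ℝ 2 φ)
    (hcoer : ∫ x in (0:ℝ)..1, (ε ^ 2 * (deriv φ x) ^ 2 + g x * (φ x) ^ 2) ≥
      Λ * ∫ x in (0:ℝ)..1, (ε ^ 2 * (deriv φ x) ^ 2 + (φ x) ^ 2)) :
    δ * (∫ x in (0:ℝ)..1,
        (ε ^ 2 * (deriv (deriv φ) x) ^ 2 + g x * (deriv φ x) ^ 2
          - 1 / 2 * deriv (deriv g) x * (φ x) ^ 2))
      + μ * (∫ x in (0:ℝ)..1, (ε ^ 2 * (deriv φ x) ^ 2 + g x * (φ x) ^ 2))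
      ≥ Λ * (μ - Cmin * δ / ε ^ 2) * ∫ x in (0:ℝ)..1, (φ x) ^ 2 := by
  have hε2 : (0:ℝ) < ε ^ 2 := by positivity
  -- continuity facts
  have hφc : Continuous φ := hφ.continuous
  have hφ1 : ContDiff ℝ 1 (deriv φ) := by
    exact (contDiff_succ_iff_deriv.mp (by exact_mod_cast hφ : ContDiff ℝ ((1:ℕ)+1) φ)).2.2
  have hφ'c : Continuous (deriv φ) := hφ1.continuous
  have hφ''c : Continuous (deriv (deriv φ)) := hφ1.continuous_deriv le_rfl
  have hgc : Continuous g := hg.continuous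
  have hg1' : ContDiff ℝ 1 (deriv g) := by
    exact (contDiff_succ_iff_deriv.mp (by exact_mod_cast hg : ContDiff ℝ ((1:ℕ)+1) g)).2.2
  have hg''c : Continuous (deriv (deriv g)) := hg1'.continuous_deriv le_rfl
  set c : ℝ := C₁ / (2 * ε ^ 2) with hc
  set J : ℝ := ∫ x in (0:ℝ)..1, (deriv φ x) ^ 2 with hJdef
  set I2 : ℝ := ∫ x in (0:ℝ)..1, (φ x) ^ 2 with hI2def
  have hJ : 0 ≤ J := intervalIntegral.integral_nonneg (by norm_num)
    (fun x _ => sq_nonneg _)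
  have hI : 0 ≤ I2 := intervalIntegral.integral_nonneg (by norm_num)
    (fun x _ => sq_nonneg _)
  -- integrability
  have int1 : IntervalIntegrable (fun x => (deriv φ x) ^ 2) MeasureTheory.volume 0 1 :=
    (hφ'c.pow 2).intervalIntegrable 0 1
  have int2 : IntervalIntegrable (fun x => (φ x) ^ 2) MeasureTheory.volume 0 1 :=
    (hφc.pow 2).intervalIntegrable 0 1
  have int2c : IntervalIntegrable (fun x => c * (φ x) ^ 2) MeasureTheory.volume 0 1 :=
    (continuous_const.mul (hφc.pow 2)).intervalIntegrable 0 1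
  have intLHS : IntervalIntegrable (fun x => -((deriv φ x) ^ 2) - c * (φ x) ^ 2)
      MeasureTheory.volume 0 1 :=
    ((hφ'c.pow 2).neg.sub (continuous_const.mul (hφc.pow 2))).intervalIntegrable 0 1
  have intD : IntervalIntegrable (fun x => ε ^ 2 * (deriv (deriv φ) x) ^ 2
      + g x * (deriv φ x) ^ 2 - 1 / 2 * deriv (deriv g) x * (φ x) ^ 2)
      MeasureTheory.volume 0 1 := by
    apply Continuous.intervalIntegrable
    continuity
  -- pointwise bound for D
  have hpt : ∀ x ∈ Icc (0:ℝ) 1, -((deriv φ x) ^ 2) - c * (φ x) ^ 2 ≤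
      ε ^ 2 * (deriv (deriv φ) x) ^ 2 + g x * (deriv φ x) ^ 2
        - 1 / 2 * deriv (deriv g) x * (φ x) ^ 2 := by
    intro x hx
    have h1 := hg1 x hx
    have h2 := hg2 x hx
    have habs : deriv (deriv g) x ≤ C₁ / ε ^ 2 := by
      rw [le_div_iff₀ hε2]
      calc deriv (deriv g) x * ε ^ 2 ≤ |deriv (deriv g) x| * ε ^ 2 :=
            mul_le_mul_of_nonneg_right (le_abs_self _) hε2.le
        _ ≤ C₁ := by linarith [h2]
    have hcc : c = (C₁ / ε ^ 2) / 2 := by rw [hc]; ring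
    rw [hcc]
    have k1 : 0 ≤ ε ^ 2 * (deriv (deriv φ) x) ^ 2 := by positivity
    have k2 : (-1) * (deriv φ x) ^ 2 ≤ g x * (deriv φ x) ^ 2 :=
      mul_le_mul_of_nonneg_right h1 (sq_nonneg _)
    have k3 : deriv (deriv g) x * (φ x) ^ 2 ≤ (C₁ / ε ^ 2) * (φ x) ^ 2 :=
      mul_le_mul_of_nonneg_right habs (sq_nonneg _)
    linarith
  have hA : (∫ x in (0:ℝ)..1, (ε ^ 2 * (deriv (deriv φ) x) ^ 2
      + g x * (deriv φ x) ^ 2 - 1 / 2 * deriv (deriv g) x * (φ x) ^ 2)) ≥ -J - c * I2 := by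
    have := intervalIntegral.integral_mono_on (by norm_num : (0:ℝ) ≤ 1) intLHS intD hpt
    have heq : (∫ x in (0:ℝ)..1, (-((deriv φ x) ^ 2) - c * (φ x) ^ 2)) = -J - c * I2 := by
      rw [intervalIntegral.integral_sub (show
          IntervalIntegrable (fun x => -((deriv φ x) ^ 2)) MeasureTheory.volume 0 1 from (hφ'c.pow 2).neg.intervalIntegrable 0 1) int2c,
        intervalIntegral.integral_neg, intervalIntegral.integral_const_mul, hJdef, hI2def]
    linarith [this, heq.symm.le, heq.le]
  -- coercivity rewritten
  have hB : (∫ x in (0:ℝ)..1, (ε ^ 2 * (deriv φ x) ^ 2 + g x * (φ x) ^ 2)) ≥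
      Λ * (ε ^ 2 * J + I2) := by
    have heq : (∫ x in (0:ℝ)..1, (ε ^ 2 * (deriv φ x) ^ 2 + (φ x) ^ 2)) = ε ^ 2 * J + I2 := by
      rw [intervalIntegral.integral_add (show
          IntervalIntegrable (fun x => ε ^ 2 * (deriv φ x) ^ 2) MeasureTheory.volume 0 1 from (continuous_const.mul (hφ'c.pow 2)).intervalIntegrable 0 1) int2,
        intervalIntegral.integral_const_mul]
    calc (∫ x in (0:ℝ)..1, (ε ^ 2 * (deriv φ x) ^ 2 + g x * (φ x) ^ 2)) ≥
        Λ * ∫ x in (0:ℝ)..1, (ε ^ 2 * (deriv φ x) ^ 2 + (φ x) ^ 2) := hcoer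
      _ = Λ * (ε ^ 2 * J + I2) := by rw [heq]
  -- arithmetic facts
  have hmax1 : 1 / Λ ≤ Cmin := hCmin ▸ le_max_left _ _
  have hmax2 : C₁ / (2 * Λ) ≤ Cmin := hCmin ▸ le_max_right _ _
  have hδle : δ ≤ Λ * μ * ε ^ 2 := by
    have h1 : 1 / Λ * δ ≤ Cmin * δ := mul_le_mul_of_nonneg_right hmax1 hδ.le
    have h2 : 1 / Λ * δ ≤ ε ^ 2 * μ := le_trans h1 hcond
    rw [div_mul_eq_mul_div, one_mul, div_le_iff₀ hΛ] at h2
    nlinarith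
  have hcle : δ * c ≤ Λ * (Cmin * δ / ε ^ 2) := by
    have h3 : C₁ ≤ 2 * Λ * Cmin := by
      rw [div_le_iff₀ (by positivity)] at hmax2; linarith
    have e1 : δ * c = δ * C₁ / (2 * ε ^ 2) := by rw [hc]; ring
    have e2 : Λ * (Cmin * δ / ε ^ 2) = Λ * Cmin * δ / ε ^ 2 := by ring
    rw [e1, e2, div_le_div_iff₀ (by positivity) hε2]
    nlinarith [mul_le_mul_of_nonneg_right h3 (mul_pos hδ hε2).le]
  -- combine
  nlinarith [mul_le_mul_of_nonneg_left hA hδ.le, mul_le_mul_of_nonneg_left hB hμ.le,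
    mul_le_mul_of_nonneg_right hcle hI, mul_nonneg (sub_nonneg.mpr hδle) hJ]
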